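/- Transfer matrix estimate: for every n ≥ 1 and all γ_1, …, γ_n ∈ [0,1], let M = ∏_{i=1}^n [[1+γ_i, 1+γ_i],[1, 2+γ_i]] (product of 2×2 real matrices). Then det(M) = ∏_{i=1}^n (1+γ_i)², the trace satisfies Tr(M) ≥ ∏_{i=1}^n (1+γ_i) + ∏_{i=1}^n (2+γ_i), and det(M) / (Tr(M))² ≤ (4/9)^n. -/

import Mathlib

lemma transfer_aux (γ : ℕ → ℝ) :
    ∀ n : ℕ, (∀ i ∈ Finset.range n, γ i ∈ Set.Icc (0 : ℝ) 1) →
    (0 ≤ (((List.range n).map (fun i => !![1 + γ i, 1 + γ i; 1, 2 + γ i])).prod) 0 1) ∧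
    (0 ≤ (((List.range n).map (fun i => !![1 + γ i, 1 + γ i; 1, 2 + γ i])).prod) 1 0) ∧
    ((∏ i ∈ Finset.range n, (1 + γ i)) ≤
      (((List.range n).map (fun i => !![1 + γ i, 1 + γ i; 1, 2 + γ i])).prod) 0 0) ∧
    ((∏ i ∈ Finset.range n, (2 + γ i)) ≤
      (((List.range n).map (fun i => !![1 + γ i, 1 + γ i; 1, 2 + γ i])).prod) 1 1) := by
  intro n
  induction n with
  | zero => intro _; simp [Matrix.one_apply]
  | succ n ih =>
    intro h
    have hγn := h n (Finset.self_mem_range_succ n)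
    have hmem : ∀ i ∈ Finset.range n, γ i ∈ Set.Icc (0 : ℝ) 1 := fun i hi =>
      h i (Finset.mem_range.mpr (lt_trans (Finset.mem_range.mp hi) (Nat.lt_succ_self n)))
    obtain ⟨h01, h10, h00, h11⟩ := ih hmem
    set P := ((List.range n).map (fun i => !![1 + γ i, 1 + γ i; 1, 2 + γ i])).prod with hP
    have hprod1 : (0:ℝ) ≤ ∏ i ∈ Finset.range n, (1 + γ i) :=
      Finset.prod_nonneg fun i hi => by have := hmem i hi; linarith [this.1]
    have hprod2 : (0:ℝ) ≤ ∏ i ∈ Finset.range n, (2 + γ i) :=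
      Finset.prod_nonneg fun i hi => by have := hmem i hi; linarith [this.1]
    have hP00 : 0 ≤ P 0 0 := le_trans hprod1 h00
    have hP11 : 0 ≤ P 1 1 := le_trans hprod2 h11
    have h1 : (0:ℝ) ≤ 1 + γ n := by linarith [hγn.1]
    have h2 : (0:ℝ) ≤ 2 + γ n := by linarith [hγn.1]
    rw [show List.range (n+1) = List.range n ++ [n] from List.range_succ]
    rw [List.map_append, List.prod_append]
    simp only [List.map_cons, List.map_nil, List.prod_cons, List.prod_nil, mul_one, ← hP]
    have e : ∀ i j : Fin 2, (P * !![1 + γ n, 1 + γ n; 1, 2 + γ n]) i j =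
        P i 0 * !![1 + γ n, 1 + γ n; 1, 2 + γ n] 0 j +
        P i 1 * !![1 + γ n, 1 + γ n; 1, 2 + γ n] 1 j := by
      intro i j
      rw [Matrix.mul_apply, Fin.sum_univ_two]
    have f00 : !![1 + γ n, 1 + γ n; 1, 2 + γ n] 0 0 = 1 + γ n := by norm_num
    have f01 : !![1 + γ n, 1 + γ n; 1, 2 + γ n] 0 1 = 1 + γ n := by norm_num
    have f10 : !![1 + γ n, 1 + γ n; 1, 2 + γ n] 1 0 = 1 := by norm_num
    have f11 : !![1 + γ n, 1 + γ n; 1, 2 + γ n] 1 1 = 2 + γ n := by norm_num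
    refine ⟨?_, ?_, ?_, ?_⟩
    · rw [e, f01, f11]; positivity
    · rw [e, f00, f10]; positivity
    · rw [e, f00, f10, Finset.prod_range_succ]
      nlinarith [mul_le_mul_of_nonneg_right h00 h1]
    · rw [e, f01, f11, Finset.prod_range_succ]
      nlinarith [mul_le_mul_of_nonneg_right h11 h2]

/-- Transfer matrix estimate: for `M = ∏_{i=1}^n [[1+γ_i, 1+γ_i],[1, 2+γ_i]]` with
`γ_i ∈ [0,1]`, one has `det M = ∏ (1+γ_i)²`,
`Tr M ≥ ∏ (1+γ_i) + ∏ (2+γ_i)`, and `det M / (Tr M)² ≤ (4/9)^n`. -/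
theorem transfer_matrix_estimate (n : ℕ) (hn : 1 ≤ n) (γ : ℕ → ℝ)
    (hγ : ∀ i ∈ Finset.range n, γ i ∈ Set.Icc (0 : ℝ) 1) :
    ∀ M : Matrix (Fin 2) (Fin 2) ℝ,
      M = ((List.range n).map (fun i => !![1 + γ i, 1 + γ i; 1, 2 + γ i])).prod →
      M.det = ∏ i ∈ Finset.range n, (1 + γ i) ^ 2 ∧
      Matrix.trace M ≥
        ∏ i ∈ Finset.range n, (1 + γ i) + ∏ i ∈ Finset.range n, (2 + γ i) ∧
      M.det / (Matrix.trace M) ^ 2 ≤ (4 / 9 : ℝ) ^ n := by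
  intro M hM
  obtain ⟨h01, h10, h00, h11⟩ := transfer_aux γ n hγ
  rw [← hM] at h01 h10 h00 h11
  have hdet : M.det = ∏ i ∈ Finset.range n, (1 + γ i) ^ 2 := by
    rw [hM]; clear hM h01 h10 h00 h11 hγ hn
    induction n with
    | zero => simp
    | succ m ihm =>
      rw [show List.range (m+1) = List.range m ++ [m] from List.range_succ,
        List.map_append, List.prod_append, Finset.prod_range_succ, Matrix.det_mul, ihm]
      simp only [List.map_cons, List.map_nil, List.prod_cons, List.prod_nil, mul_one]
      congr 1
      rw [Matrix.det_fin_two_of]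
      ring
  have htr : Matrix.trace M = M 0 0 + M 1 1 := Matrix.trace_fin_two M
  set a := ∏ i ∈ Finset.range n, (1 + γ i) with ha
  set b := ∏ i ∈ Finset.range n, (2 + γ i) with hb
  have ha0 : 0 ≤ a := Finset.prod_nonneg fun i hi => by have := hγ i hi; linarith [this.1]
  have hb0 : (0:ℝ) < b := Finset.prod_pos fun i hi => by have := hγ i hi; linarith [this.1]
  have htr_ge : Matrix.trace M ≥ a + b := by rw [htr]; linarith
  refine ⟨hdet, htr_ge, ?_⟩
  have hab : a ≤ (2/3 : ℝ)^n * b := by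
    have : ((2:ℝ)/3)^n = ∏ _i ∈ Finset.range n, ((2:ℝ)/3) := by
      simp [Finset.prod_const, div_pow]
    rw [this, ha, hb, ← Finset.prod_mul_distrib]
    refine Finset.prod_le_prod (fun i hi => by have := hγ i hi; linarith [this.1]) ?_
    intro i hi
    have := hγ i hi
    linarith [this.2]
  have hT0 : (0:ℝ) < Matrix.trace M := lt_of_lt_of_le (by linarith) htr_ge
  have hdeta : M.det = a ^ 2 := by rw [hdet, ha, Finset.prod_pow]
  rw [hdeta]
  have key : a ^ 2 ≤ ((2/3:ℝ)^n)^2 * (Matrix.trace M)^2 := by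
    have h1 : a ≤ (2/3:ℝ)^n * Matrix.trace M := by
      calc a ≤ (2/3:ℝ)^n * b := hab
        _ ≤ (2/3:ℝ)^n * Matrix.trace M := by
            apply mul_le_mul_of_nonneg_left (by linarith) (by positivity)
    nlinarith [pow_nonneg (by norm_num : (0:ℝ) ≤ 2/3) n]
  rw [div_le_iff₀ (by positivity)]
  calc a ^ 2 ≤ ((2/3:ℝ)^n)^2 * (Matrix.trace M)^2 := key
    _ = (4/9:ℝ)^n * (Matrix.trace M)^2 := by
        rw [← pow_mul, mul_comm n 2, pow_mul]; norm_num
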